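/- Let p be a positive integer. If f(z) = ∑_{k=1}^∞ a_k z^{pk} converges for all z in the unit disk 𝔻 (so the constant coefficient vanishes, f(0) = 0) and |f(z)| ≤ 1 for all z ∈ 𝔻, then ∑_{k=1}^∞ |a_k| r^{pk} ≤ 1 for all r with 0 ≤ r ≤ 2^{−1/(2p)}. -/

import Mathlib

open Complex Finset


lemma bohr_E_norm (N : ℕ) (t : ℤ) : ‖Complex.exp (2*Real.pi*Complex.I*t/N)‖ = 1 := by
  have h : (2*Real.pi*Complex.I*t/N : ℂ) = ((2*Real.pi*t/N : ℝ) : ℂ) * Complex.I := by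
    push_cast; ring
  rw [h, Complex.norm_exp_ofReal_mul_I]

lemma bohr_E_pow (N : ℕ) (j : ℕ) (t : ℤ) :
    Complex.exp (2*Real.pi*Complex.I*t/N) ^ j
      = Complex.exp (2*Real.pi*Complex.I*((j:ℤ)*t)/N) := by
  rw [← Complex.exp_nat_mul]; congr 1; push_cast; ring

lemma bohr_orth (N : ℕ) (hN : 0 < N) (m : ℤ) :
    ∑ j ∈ Finset.range N, Complex.exp (2*Real.pi*Complex.I*m/N) ^ j
      = if (N:ℤ) ∣ m then (N:ℂ) else 0 := by
  have hNne : (N:ℂ) ≠ 0 := Nat.cast_ne_zero.mpr hN.ne'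
  by_cases h : (N:ℤ) ∣ m
  · obtain ⟨k, hk⟩ := h
    have : (2*Real.pi*Complex.I*m/N : ℂ) = k*(2*Real.pi*Complex.I) := by
      rw [hk]; push_cast; field_simp
    rw [this, Complex.exp_int_mul_two_pi_mul_I]
    simp [hk]
  · have hne : Complex.exp (2*Real.pi*Complex.I*m/N) ≠ 1 := by
      intro hone
      obtain ⟨n, hn⟩ := Complex.exp_eq_one_iff.mp hone
      apply h
      refine ⟨n, ?_⟩
      have hπ : (Real.pi : ℂ) ≠ 0 := Complex.ofReal_ne_zero.mpr Real.pi_ne_zero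
      have hI : Complex.I ≠ 0 := Complex.I_ne_zero
      have h2 : (m : ℂ) = N * n := by
        field_simp at hn
        have h3 : (2*Real.pi*Complex.I : ℂ) * m = (2*Real.pi*Complex.I) * (N * n) := by
          rw [show (2*Real.pi*Complex.I : ℂ) * m = 2*Real.pi*Complex.I*m by ring, hn]
        exact mul_left_cancel₀ (by simp [hπ, hI]) h3
      exact_mod_cast h2
    rw [geom_sum_eq hne]
    have hpow : Complex.exp (2*Real.pi*Complex.I*m/N) ^ N = 1 := by
      rw [← Complex.exp_nat_mul]
      have : (N:ℂ) * (2*Real.pi*Complex.I*m/N) = m * (2*Real.pi*Complex.I) := by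
        field_simp
      rw [this, Complex.exp_int_mul_two_pi_mul_I]
    rw [hpow]
    simp [h]

set_option maxHeartbeats 800000 in
lemma bohr_summable (p : ℕ) (hp : 0 < p) (a : ℕ → ℂ) (f : ℂ → ℂ)
    (hf : ∀ z : ℂ, ‖z‖ < 1 → HasSum (fun k : ℕ => a (k + 1) * z ^ (p * (k + 1))) (f z))
    (ρ : ℝ) (h0 : 0 ≤ ρ) (h1 : ρ < 1) :
    Summable (fun k : ℕ => ‖a (k + 1)‖ * ρ ^ (p * (k + 1))) := by
  set ρ' : ℝ := (ρ + 1) / 2 with hρ'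
  have hρ'0 : 0 < ρ' := by positivity
  have hρρ' : ρ < ρ' := by simp only [hρ']; linarith
  have hρ'1 : ρ' < 1 := by simp only [hρ']; linarith
  have hz : ‖(ρ' : ℂ)‖ < 1 := by
    rw [Complex.norm_real, Real.norm_of_nonneg hρ'0.le]; exact hρ'1
  have hsum := (hf (ρ' : ℂ) hz).summable
  have htend := hsum.tendsto_atTop_zero.norm
  have hbdd : BddAbove (Set.range fun k => ‖a (k + 1) * (ρ':ℂ) ^ (p * (k + 1))‖) :=
    htend.bddAbove_range
  obtain ⟨C, hC⟩ := hbdd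
  have hCk : ∀ k : ℕ, ‖a (k + 1)‖ * ρ' ^ (p * (k + 1)) ≤ C := by
    intro k
    have := hC (Set.mem_range_self k)
    rwa [norm_mul, norm_pow, Complex.norm_real, Real.norm_of_nonneg hρ'0.le] at this
  have hC0 : 0 ≤ C := le_trans (by positivity) (hCk 0)
  set q : ℝ := ρ / ρ' with hq
  have hq0 : 0 ≤ q := by positivity
  have hq1 : q < 1 := (div_lt_one hρ'0).mpr hρρ'
  refine Summable.of_nonneg_of_le (fun k => by positivity) (fun k => ?_)
    ((summable_geometric_of_lt_one hq0 hq1).mul_left C)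
  ·
    have hsplit : ρ ^ (p * (k+1)) = ρ' ^ (p * (k+1)) * q ^ (p * (k+1)) := by
      rw [← mul_pow, mul_div_cancel₀ _ hρ'0.ne']
    have hqpow : q ^ (p * (k + 1)) ≤ q ^ k := by
      apply pow_le_pow_of_le_one hq0 hq1.le
      calc k ≤ k + 1 := Nat.le_succ k
        _ ≤ p * (k + 1) := Nat.le_mul_of_pos_left _ hp
    calc ‖a (k+1)‖ * ρ ^ (p*(k+1))
        = (‖a (k+1)‖ * ρ' ^ (p*(k+1))) * q ^ (p*(k+1)) := by rw [hsplit]; ring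
      _ ≤ C * q ^ k := by
          apply mul_le_mul (hCk k) hqpow (by positivity) hC0

open scoped Classical in
set_option maxHeartbeats 1000000 in
lemma bohr_key (p M : ℕ) (hp : 0 < p) (hM : 0 < M)
    (c : ℕ → ℂ) (hc : Summable (fun k => ‖c k‖))
    (w : ℕ → ℂ) (hw : ∀ j, ‖w j‖ ≤ 1)
    (hs : ∀ j : ℕ, HasSum (fun k : ℕ =>
      c k * Complex.exp (2*Real.pi*Complex.I*(((j * (p * (k+1)) : ℕ) : ℤ))/((p*M : ℕ) : ℕ))) (w j))
    : (∑' kl : ℕ × ℕ,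
        (if (M:ℤ) ∣ (kl.1:ℤ) - (kl.2:ℤ) then c kl.1 * (starRingEnd ℂ) (c kl.2) else 0)).re ≤ 1 := by
  set N : ℕ := p * M with hN
  have hNpos : 0 < N := Nat.mul_pos hp hM
  set E : ℤ → ℂ := fun t => Complex.exp (2*Real.pi*Complex.I*t/(N:ℕ)) with hE
  have hEnorm : ∀ t : ℤ, ‖E t‖ = 1 := fun t => bohr_E_norm N t
  have hEmul : ∀ s t : ℤ, E s * E t = E (s+t) := by
    intro s t
    simp only [hE, ← Complex.exp_add]
    congr 1
    push_cast
    ring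
  have hEpow : ∀ (j : ℕ) (t : ℤ), E (↑j * t) = E t ^ j := by
    intro j t
    simp only [hE, ← Complex.exp_nat_mul]
    congr 1
    push_cast
    ring
  have hEconj : ∀ t : ℤ, (starRingEnd ℂ) (E t) = E (-t) := by
    intro t
    simp only [hE, ← Complex.exp_conj]
    congr 1
    simp only [map_div₀, map_mul, Complex.conj_I, Complex.conj_ofReal, map_intCast,
      map_natCast, map_ofNat]
    push_cast
    ring
  have hs' : ∀ j : ℕ, HasSum (fun k : ℕ => c k * E ((j * (p * (k+1)) : ℕ) : ℤ)) (w j) := hs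
  -- conjugate sums
  have hconj : ∀ j : ℕ, HasSum (fun l : ℕ =>
      (starRingEnd ℂ) (c l) * E (-((j * (p * (l+1)) : ℕ) : ℤ))) ((starRingEnd ℂ) (w j)) := by
    intro j
    have h := (hs' j).star
    have heq : (fun l : ℕ => star (c l * E ((j * (p * (l+1)) : ℕ) : ℤ)))
        = (fun l : ℕ => (starRingEnd ℂ) (c l) * E (-((j * (p * (l+1)) : ℕ) : ℤ))) := by
      funext l
      rw [star_mul']
      rw [show star (E ((j * (p * (l+1)) : ℕ) : ℤ))
          = (starRingEnd ℂ) (E ((j * (p * (l+1)) : ℕ) : ℤ)) from rfl, hEconj]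
      rw [show star (c l) = (starRingEnd ℂ) (c l) from rfl]
    rw [heq] at h
    exact h
  -- norms summable
  have hnorm1 : ∀ j : ℕ, Summable (fun k : ℕ => ‖c k * E ((j * (p * (k+1)) : ℕ) : ℤ)‖) := by
    intro j
    have : (fun k : ℕ => ‖c k * E ((j * (p * (k+1)) : ℕ) : ℤ)‖) = fun k => ‖c k‖ := by
      funext k; rw [norm_mul, hEnorm, mul_one]
    rw [this]; exact hc
  have hnorm2 : ∀ j : ℕ, Summable (fun l : ℕ =>
      ‖(starRingEnd ℂ) (c l) * E (-((j * (p * (l+1)) : ℕ) : ℤ))‖) := by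
    intro j
    have : (fun l : ℕ => ‖(starRingEnd ℂ) (c l) * E (-((j * (p * (l+1)) : ℕ) : ℤ))‖)
        = fun l => ‖c l‖ := by
      funext l; rw [norm_mul, hEnorm, mul_one, RCLike.norm_conj]
    rw [this]; exact hc
  -- product identity
  have hprod : ∀ j : ℕ, w j * (starRingEnd ℂ) (w j)
      = ∑' kl : ℕ × ℕ, (c kl.1 * (starRingEnd ℂ) (c kl.2))
          * E ((j:ℤ)*((p:ℤ)*((kl.1:ℤ) - (kl.2:ℤ)))) := by
    intro j
    have h1 : w j * (starRingEnd ℂ) (w j)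
        = (∑' k : ℕ, c k * E ((j * (p * (k+1)) : ℕ) : ℤ))
          * (∑' l : ℕ, (starRingEnd ℂ) (c l) * E (-((j * (p * (l+1)) : ℕ) : ℤ))) := by
      rw [(hs' j).tsum_eq, (hconj j).tsum_eq]
    rw [h1, tsum_mul_tsum_of_summable_norm (hnorm1 j) (hnorm2 j)]
    congr 1
    funext kl
    rw [show (c kl.1 * E ((j * (p * (kl.1+1)) : ℕ) : ℤ))
          * ((starRingEnd ℂ) (c kl.2) * E (-((j * (p * (kl.2+1)) : ℕ) : ℤ)))
        = (c kl.1 * (starRingEnd ℂ) (c kl.2))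
          * (E ((j * (p * (kl.1+1)) : ℕ) : ℤ) * E (-((j * (p * (kl.2+1)) : ℕ) : ℤ))) by ring]
    rw [hEmul]
    congr 2
    push_cast
    ring
  -- summability of the pair functions
  have hpairnorm : Summable (fun kl : ℕ × ℕ => ‖c kl.1‖ * ‖c kl.2‖) :=
    hc.mul_of_nonneg hc (fun k => norm_nonneg _) (fun l => norm_nonneg _)
  have hpair : ∀ j : ℕ, Summable (fun kl : ℕ × ℕ =>
      (c kl.1 * (starRingEnd ℂ) (c kl.2)) * E ((j:ℤ)*((p:ℤ)*((kl.1:ℤ) - (kl.2:ℤ))))) := by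
    intro j
    apply Summable.of_norm_bounded hpairnorm
    intro kl
    rw [norm_mul, norm_mul, hEnorm, mul_one, RCLike.norm_conj]
  -- exchange sum
  have hexch : ∑ j ∈ Finset.range N, (w j * (starRingEnd ℂ) (w j))
      = ∑' kl : ℕ × ℕ, ∑ j ∈ Finset.range N,
          (c kl.1 * (starRingEnd ℂ) (c kl.2)) * E ((j:ℤ)*((p:ℤ)*((kl.1:ℤ) - (kl.2:ℤ)))) := by
    rw [Summable.tsum_finsetSum (fun j _ => hpair j)]
    exact Finset.sum_congr rfl (fun j _ => hprod j)
  -- inner sum via orthogonality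
  have hinner : ∀ kl : ℕ × ℕ, (∑ j ∈ Finset.range N,
      (c kl.1 * (starRingEnd ℂ) (c kl.2)) * E ((j:ℤ)*((p:ℤ)*((kl.1:ℤ) - (kl.2:ℤ)))))
      = (N:ℂ) * (if (M:ℤ) ∣ (kl.1:ℤ) - (kl.2:ℤ) then c kl.1 * (starRingEnd ℂ) (c kl.2) else 0) := by
    intro kl
    have h2 : ∀ j : ℕ, E ((j:ℤ)*((p:ℤ)*((kl.1:ℤ) - (kl.2:ℤ))))
        = E ((p:ℤ)*((kl.1:ℤ) - (kl.2:ℤ))) ^ j := fun j => hEpow j _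
    simp_rw [h2]
    rw [← Finset.mul_sum]
    rw [show (∑ j ∈ Finset.range N, E ((p:ℤ)*((kl.1:ℤ) - (kl.2:ℤ))) ^ j)
        = if (N:ℤ) ∣ (p:ℤ)*((kl.1:ℤ) - (kl.2:ℤ)) then (N:ℂ) else 0 from bohr_orth N hNpos _]
    have hdvd : ((N:ℤ) ∣ (p:ℤ)*((kl.1:ℤ) - (kl.2:ℤ))) ↔ ((M:ℤ) ∣ (kl.1:ℤ) - (kl.2:ℤ)) := by
      have hNZ : (N:ℤ) = (p:ℤ) * (M:ℤ) := by rw [hN]; push_cast; ring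
      rw [hNZ]
      exact mul_dvd_mul_iff_left (by exact_mod_cast hp.ne')
    by_cases hd : (M:ℤ) ∣ (kl.1:ℤ) - (kl.2:ℤ)
    · rw [if_pos (hdvd.mpr hd), if_pos hd]; ring
    · rw [if_neg (fun hx => hd (hdvd.mp hx)), if_neg hd]; ring
  have hbig : ∑ j ∈ Finset.range N, (w j * (starRingEnd ℂ) (w j))
      = (N:ℂ) * ∑' kl : ℕ × ℕ,
          (if (M:ℤ) ∣ (kl.1:ℤ) - (kl.2:ℤ) then c kl.1 * (starRingEnd ℂ) (c kl.2) else 0) := by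
    rw [hexch]
    simp_rw [hinner]
    rw [tsum_mul_left]
  -- take real parts
  have hlhs : (∑ j ∈ Finset.range N, (w j * (starRingEnd ℂ) (w j))).re ≤ (N:ℝ) := by
    rw [Complex.re_sum]
    have hb : ∀ j ∈ Finset.range N, (w j * (starRingEnd ℂ) (w j)).re ≤ 1 := by
      intro j _
      rw [Complex.mul_conj]
      simp only [Complex.ofReal_re]
      rw [Complex.normSq_eq_norm_sq]
      have h := hw j
      nlinarith [norm_nonneg (w j)]
    calc ∑ j ∈ Finset.range N, (w j * (starRingEnd ℂ) (w j)).re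
        ≤ ∑ _j ∈ Finset.range N, (1:ℝ) := Finset.sum_le_sum hb
      _ = N := by simp
  rw [hbig] at hlhs
  have hre : ((N:ℂ) * ∑' kl : ℕ × ℕ,
      (if (M:ℤ) ∣ (kl.1:ℤ) - (kl.2:ℤ) then c kl.1 * (starRingEnd ℂ) (c kl.2) else 0)).re
      = (N:ℝ) * (∑' kl : ℕ × ℕ,
      (if (M:ℤ) ∣ (kl.1:ℤ) - (kl.2:ℤ) then c kl.1 * (starRingEnd ℂ) (c kl.2) else 0)).re := by
    simp [Complex.mul_re]
  rw [hre] at hlhs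
  have hNR : (0:ℝ) < N := by exact_mod_cast hNpos
  nlinarith [hlhs]

open scoped Classical in
set_option maxHeartbeats 1000000 in
lemma bohr_parseval (p : ℕ) (hp : 0 < p) (a : ℕ → ℂ) (f : ℂ → ℂ)
    (hf : ∀ z : ℂ, ‖z‖ < 1 → HasSum (fun k : ℕ => a (k + 1) * z ^ (p * (k + 1))) (f z))
    (hbound : ∀ z : ℂ, ‖z‖ < 1 → ‖f z‖ ≤ 1)
    (ρ : ℝ) (h0 : 0 ≤ ρ) (h1 : ρ < 1) (F : Finset ℕ) :
    ∑ k ∈ F, (‖a (k+1)‖ * ρ ^ (p*(k+1)))^2 ≤ 1 := by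
  set c : ℕ → ℂ := fun k => a (k+1) * (ρ:ℂ) ^ (p*(k+1)) with hcdef
  have hcn : ∀ k, ‖c k‖ = ‖a (k+1)‖ * ρ ^ (p*(k+1)) := by
    intro k
    rw [hcdef]
    rw [norm_mul, norm_pow, Complex.norm_real, Real.norm_of_nonneg h0]
  have hc : Summable (fun k => ‖c k‖) := by
    have h := bohr_summable p hp a f hf ρ h0 h1
    apply h.congr
    intro k
    rw [hcn]
  set S : ℝ := ∑' k, ‖c k‖ with hSdef
  have hS0 : 0 ≤ S := tsum_nonneg (fun k => norm_nonneg _)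
  have hpairnorm : Summable (fun kl : ℕ × ℕ => ‖c kl.1‖ * ‖c kl.2‖) :=
    hc.mul_of_nonneg hc (fun k => norm_nonneg _) (fun l => norm_nonneg _)
  -- the key inequality for each M
  have hkey : ∀ M : ℕ, 0 < M →
      (∑' kl : ℕ × ℕ,
        (if (M:ℤ) ∣ (kl.1:ℤ) - (kl.2:ℤ) then c kl.1 * (starRingEnd ℂ) (c kl.2) else 0)).re ≤ 1 := by
    intro M hM
    have hNpos : 0 < p * M := Nat.mul_pos hp hM
    set z : ℕ → ℂ :=
      fun j => (ρ:ℂ) * Complex.exp (2*Real.pi*Complex.I*((j:ℕ):ℤ)/((p*M : ℕ):ℕ)) with hz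
    have hznorm : ∀ j, ‖z j‖ < 1 := by
      intro j
      rw [hz]
      simp only
      rw [norm_mul, bohr_E_norm, mul_one, Complex.norm_real, Real.norm_of_nonneg h0]
      exact h1
    apply bohr_key p M hp hM c hc (fun j => f (z j)) (fun j => hbound (z j) (hznorm j))
    intro j
    have h := hf (z j) (hznorm j)
    have heq : (fun k : ℕ => a (k+1) * (z j) ^ (p*(k+1)))
        = (fun k : ℕ => c k *
            Complex.exp (2*Real.pi*Complex.I*(((j * (p * (k+1)) : ℕ) : ℤ))/((p*M : ℕ):ℕ))) := by
      funext k
      rw [hz]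
      simp only
      rw [mul_pow, bohr_E_pow]
      rw [show Complex.exp (2*Real.pi*Complex.I*(((p*(k+1) : ℕ):ℤ)*((j:ℕ):ℤ))/((p*M : ℕ):ℕ))
          = Complex.exp (2*Real.pi*Complex.I*(((j * (p * (k+1)) : ℕ) : ℤ))/((p*M : ℕ):ℕ)) by
        congr 1; push_cast; ring]
      rw [hcdef]
      ring
    rw [heq] at h
    exact h
  -- error estimate
  have herr : ∀ M : ℕ, 0 < M →
      ∑ k ∈ F, ‖c k‖^2 ≤ 1 + 2*S*(∑' k, ‖c (k + M)‖) := by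
    intro M hM
    set d : ℕ × ℕ → ℂ := fun kl =>
      if (M:ℤ) ∣ (kl.1:ℤ) - (kl.2:ℤ) then c kl.1 * (starRingEnd ℂ) (c kl.2) else 0 with hddef
    set e : ℕ × ℕ → ℂ := fun kl =>
      if kl.1 = kl.2 then c kl.1 * (starRingEnd ℂ) (c kl.1) else 0 with hedef
    have hnd : ∀ kl : ℕ × ℕ, ‖d kl‖ ≤ ‖c kl.1‖ * ‖c kl.2‖ := by
      intro kl
      rw [hddef]
      simp only
      split_ifs
      · exact le_of_eq (by rw [norm_mul, RCLike.norm_conj])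
      · simp only [norm_zero]
        positivity
    have hne : ∀ kl : ℕ × ℕ, ‖e kl‖ ≤ ‖c kl.1‖ * ‖c kl.2‖ := by
      intro kl
      rw [hedef]
      simp only
      split_ifs with hkl
      · exact le_of_eq (by rw [norm_mul, RCLike.norm_conj, hkl])
      · simp only [norm_zero]
        positivity
    have hd : Summable d := Summable.of_norm_bounded hpairnorm hnd
    have he : Summable e := Summable.of_norm_bounded hpairnorm hne
    -- diagonal lower bound
    have hediag : ∑ k ∈ F, ‖c k‖^2 ≤ (∑' kl : ℕ × ℕ, e kl).re := by
      have hre : (∑' kl : ℕ × ℕ, e kl).re = ∑' kl : ℕ × ℕ, (e kl).re := Complex.re_tsum he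
      have hterm : ∀ kl : ℕ × ℕ, (e kl).re = if kl.1 = kl.2 then ‖c kl.1‖^2 else 0 := by
        intro kl
        rw [hedef]
        simp only
        split_ifs
        · rw [Complex.mul_conj, Complex.normSq_eq_norm_sq]
          simp [← Complex.ofReal_pow]
        · simp
      have hsumre : Summable (fun kl : ℕ × ℕ => (e kl).re) := by
        apply Summable.of_norm_bounded hpairnorm
        intro kl
        rw [hterm kl]
        split_ifs with hkl
        · rw [Real.norm_of_nonneg (by positivity), hkl, pow_two]
        · simp only [norm_zero]
          positivity
      rw [hre]
      have himg : ∑ k ∈ F, ‖c k‖^2 = ∑ kl ∈ F.image (fun k => (k,k)), (e kl).re := by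
        rw [Finset.sum_image (by intro x _ y _ h; simpa using congrArg Prod.fst h)]
        apply Finset.sum_congr rfl
        intro k _
        rw [hterm]
        simp
      rw [himg]
      apply Summable.sum_le_tsum
      · intro kl _
        rw [hterm]
        split_ifs
        · positivity
        · exact le_refl 0
      · exact hsumre
    -- off-diagonal error bound
    set u : ℕ → ℝ := fun k => if M ≤ k then ‖c k‖ else 0 with hudef
    have hu_nonneg : ∀ k, 0 ≤ u k := by
      intro k; simp only [hudef]; split_ifs <;> simp [norm_nonneg]
    have hu_le : ∀ k, u k ≤ ‖c k‖ := by
      intro k; simp only [hudef]; split_ifs <;> simp [norm_nonneg]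
    have hu_sum : Summable u := Summable.of_nonneg_of_le hu_nonneg hu_le hc
    set g : ℕ × ℕ → ℝ := fun kl => u kl.1 * ‖c kl.2‖ + ‖c kl.1‖ * u kl.2 with hgdef
    have hg1 : Summable (fun kl : ℕ × ℕ => u kl.1 * ‖c kl.2‖) :=
      hu_sum.mul_of_nonneg hc hu_nonneg (fun l => norm_nonneg _)
    have hg2 : Summable (fun kl : ℕ × ℕ => ‖c kl.1‖ * u kl.2) :=
      hc.mul_of_nonneg hu_sum (fun l => norm_nonneg _) hu_nonneg
    have hg : Summable g := hg1.add hg2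
    have hpt : ∀ kl : ℕ × ℕ, ‖e kl - d kl‖ ≤ g kl := by
      intro kl
      have hgn : 0 ≤ g kl := by
        rw [hgdef]
        have := hu_nonneg kl.1
        have := hu_nonneg kl.2
        positivity
      by_cases hkl : kl.1 = kl.2
      · have hdvd : (M:ℤ) ∣ (kl.1:ℤ) - (kl.2:ℤ) := by rw [hkl]; simp
        rw [hedef, hddef]
        simp only
        rw [if_pos hkl, if_pos hdvd, hkl]
        simpa using hgn
      · rw [hedef, hddef]
        simp only
        rw [if_neg hkl]
        by_cases hdvd : (M:ℤ) ∣ (kl.1:ℤ) - (kl.2:ℤ)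
        · rw [if_pos hdvd, zero_sub, norm_neg, norm_mul, RCLike.norm_conj]
          have hMk : M ≤ kl.1 ∨ M ≤ kl.2 := by
            rcases lt_or_gt_of_ne (fun hh : (kl.1:ℤ) = (kl.2:ℤ) => hkl (by exact_mod_cast hh))
              with hlt | hgt
            · right
              have hpos : (0:ℤ) < (kl.2:ℤ) - kl.1 := by omega
              have hd2 : (M:ℤ) ∣ ((kl.2:ℤ) - (kl.1:ℤ)) := by
                have h' := dvd_neg.mpr hdvd
                rwa [neg_sub] at h'
              have := Int.le_of_dvd hpos hd2
              omega
            · left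
              have hpos : (0:ℤ) < (kl.1:ℤ) - kl.2 := by omega
              have := Int.le_of_dvd hpos hdvd
              omega
          rcases hMk with hMk | hMk
          · rw [hgdef]
            simp only
            rw [hudef]
            simp only
            rw [if_pos hMk]
            have h2 : 0 ≤ ‖c kl.1‖ * u kl.2 := mul_nonneg (norm_nonneg _) (hu_nonneg kl.2)
            nlinarith [norm_nonneg (c kl.1), norm_nonneg (c kl.2)]
          · rw [hgdef]
            simp only
            rw [hudef]
            simp only
            rw [if_pos hMk]
            have h2 : 0 ≤ u kl.1 * ‖c kl.2‖ := mul_nonneg (hu_nonneg kl.1) (norm_nonneg _)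
            nlinarith [norm_nonneg (c kl.1), norm_nonneg (c kl.2)]
        · rw [if_neg hdvd]
          simpa using hgn
    have hed_norm : Summable (fun kl : ℕ × ℕ => ‖e kl - d kl‖) :=
      Summable.of_nonneg_of_le (fun kl => norm_nonneg _) hpt hg
    -- compute tsum of g
    have hT : (∑' k, u k) = ∑' k, ‖c (k + M)‖ := by
      have hsplit := Summable.sum_add_tsum_nat_add M hu_sum
      have hzero : ∑ i ∈ Finset.range M, u i = 0 := by
        apply Finset.sum_eq_zero
        intro i hi
        rw [hudef]
        simp only
        rw [if_neg (by simp at hi; omega)]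
      have hshift : (fun k => u (k + M)) = fun k => ‖c (k + M)‖ := by
        funext k
        rw [hudef]
        simp only
        rw [if_pos (by omega)]
      rw [hzero, zero_add, hshift] at hsplit
      exact hsplit.symm
    have hgsum : (∑' kl : ℕ × ℕ, g kl) = 2 * S * (∑' k, ‖c (k + M)‖) := by
      rw [hgdef]
      rw [Summable.tsum_add hg1 hg2]
      have hnu : Summable (fun k => ‖u k‖) := by
        apply Summable.congr hu_sum
        intro k
        rw [Real.norm_of_nonneg (hu_nonneg k)]
      have hnc : Summable (fun k => ‖(‖c k‖)‖) := by
        apply Summable.congr hc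
        intro k
        rw [Real.norm_of_nonneg (norm_nonneg _)]
      rw [← tsum_mul_tsum_of_summable_norm hnu hnc, ← tsum_mul_tsum_of_summable_norm hnc hnu]
      rw [hT, ← hSdef]
      ring
    -- assemble
    have hsplit : (∑' kl : ℕ × ℕ, e kl) = (∑' kl : ℕ × ℕ, d kl) + ∑' kl : ℕ × ℕ, (e kl - d kl) := by
      rw [← Summable.tsum_add hd (he.sub hd)]
      congr 1
      funext kl
      ring
    have hbound2 : (∑' kl : ℕ × ℕ, (e kl - d kl)).re ≤ 2 * S * (∑' k, ‖c (k + M)‖) := by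
      calc (∑' kl : ℕ × ℕ, (e kl - d kl)).re
          ≤ ‖∑' kl : ℕ × ℕ, (e kl - d kl)‖ := Complex.re_le_norm _
        _ ≤ ∑' kl : ℕ × ℕ, ‖e kl - d kl‖ := norm_tsum_le_tsum_norm hed_norm
        _ ≤ ∑' kl : ℕ × ℕ, g kl := Summable.tsum_le_tsum hpt hed_norm hg
        _ = 2 * S * (∑' k, ‖c (k + M)‖) := hgsum
    calc ∑ k ∈ F, ‖c k‖^2 ≤ (∑' kl : ℕ × ℕ, e kl).re := hediag
      _ = (∑' kl : ℕ × ℕ, d kl).re + (∑' kl : ℕ × ℕ, (e kl - d kl)).re := by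
          rw [hsplit, Complex.add_re]
      _ ≤ 1 + 2 * S * (∑' k, ‖c (k + M)‖) := add_le_add (hkey M hM) hbound2
  -- take M → ∞
  have hlim : Filter.Tendsto (fun M : ℕ => 1 + 2*S*(∑' k, ‖c (k + M)‖))
      Filter.atTop (nhds 1) := by
    have h0' : Filter.Tendsto (fun M : ℕ => ∑' k, ‖c (k + M)‖) Filter.atTop (nhds 0) :=
      tendsto_sum_nat_add (fun k => ‖c k‖)
    have := ((h0'.const_mul (2*S)).const_add 1)
    simpa using this
  have hfinal : ∑ k ∈ F, ‖c k‖^2 ≤ 1 := by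
    apply ge_of_tendsto hlim
    filter_upwards [Filter.eventually_ge_atTop 1] with M hM
    exact herr M hM
  calc ∑ k ∈ F, (‖a (k+1)‖ * ρ ^ (p*(k+1)))^2
      = ∑ k ∈ F, ‖c k‖^2 := by
        apply Finset.sum_congr rfl
        intro k _
        rw [hcn]
    _ ≤ 1 := hfinal


set_option maxHeartbeats 1000000 in
/-- Bohr's inequality for bounded analytic functions of the form `∑_{k≥1} aₖ z^(pk)`
(vanishing constant coefficient): the majorant series is at most `1` for
`r ≤ 2^(−1/(2p))`. -/
theorem bohr_inequality_p_symmetric_no_constant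
    (p : ℕ) (hp : 0 < p)
    (a : ℕ → ℂ) (f : ℂ → ℂ)
    (hf : ∀ z : ℂ, ‖z‖ < 1 → HasSum (fun k : ℕ => a (k + 1) * z ^ (p * (k + 1))) (f z))
    (hbound : ∀ z : ℂ, ‖z‖ < 1 → ‖f z‖ ≤ 1) :
    ∀ r : ℝ, 0 ≤ r → r ≤ (2 : ℝ) ^ (-(1 / (2 * (p : ℝ)))) →
      (∑' k : ℕ, ‖a (k + 1)‖ * r ^ (p * (k + 1))) ≤ 1 := by
  intro r hr0 hr2
  have hpR : (0:ℝ) < p := by exact_mod_cast hp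
  have hexpneg : -(1 / (2 * (p:ℝ))) < 0 := by
    have : 0 < 1 / (2 * (p:ℝ)) := by positivity
    linarith
  have hrad1 : (2 : ℝ) ^ (-(1 / (2 * (p : ℝ)))) < 1 :=
    Real.rpow_lt_one_of_one_lt_of_neg (by norm_num) hexpneg
  have hr1 : r < 1 := lt_of_le_of_lt hr2 hrad1
  -- y = r^(2p) ≤ 1/2
  set y : ℝ := r ^ (2*p) with hydef
  have hy0 : 0 ≤ y := by positivity
  have hy : y ≤ 1/2 := by
    have hle : r ^ (2*p) ≤ ((2 : ℝ) ^ (-(1 / (2 * (p : ℝ))))) ^ (2*p) :=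
      pow_le_pow_left₀ hr0 hr2 (2*p)
    have heq : ((2 : ℝ) ^ (-(1 / (2 * (p : ℝ))))) ^ (2*p) = 1/2 := by
      rw [← Real.rpow_natCast ((2 : ℝ) ^ (-(1 / (2 * (p : ℝ))))) (2*p)]
      rw [← Real.rpow_mul (by norm_num : (0:ℝ) ≤ 2)]
      rw [show (-(1 / (2 * (p : ℝ)))) * ((2*p : ℕ) : ℝ) = -1 by
        push_cast
        field_simp]
      rw [Real.rpow_neg_one]
      norm_num
    rw [hydef]
    rw [heq] at hle
    exact hle
  have h1y : 0 < 1 - y := by linarith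
  -- coefficient square sums are at most 1
  have hsq : ∀ F : Finset ℕ, ∑ k ∈ F, ‖a (k+1)‖^2 ≤ 1 := by
    intro F
    set ρ : ℕ → ℝ := fun n => 1 - (1/2 : ℝ)^n with hρdef
    have hρ0 : ∀ n, 0 ≤ ρ n := by
      intro n
      have : (1/2:ℝ)^n ≤ 1 := pow_le_one₀ (by norm_num) (by norm_num)
      simp only [hρdef]
      linarith
    have hρ1 : ∀ n, ρ n < 1 := by
      intro n
      have : (0:ℝ) < (1/2:ℝ)^n := by positivity
      simp only [hρdef]
      linarith
    have hρlim : Filter.Tendsto ρ Filter.atTop (nhds 1) := by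
      have h2 : Filter.Tendsto (fun n : ℕ => (1/2:ℝ)^n) Filter.atTop (nhds 0) := by
        apply tendsto_pow_atTop_nhds_zero_of_lt_one (by norm_num) (by norm_num)
      have h6 := (tendsto_const_nhds (x := (1:ℝ)) (f := Filter.atTop (α := ℕ))).sub h2
      rw [hρdef]
      simpa using h6
    have hG : Filter.Tendsto (fun n => ∑ k ∈ F, (‖a (k+1)‖ * (ρ n) ^ (p*(k+1)))^2)
        Filter.atTop (nhds (∑ k ∈ F, ‖a (k+1)‖^2)) := by
      have : ∀ k ∈ F, Filter.Tendsto (fun n => (‖a (k+1)‖ * (ρ n) ^ (p*(k+1)))^2)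
          Filter.atTop (nhds (‖a (k+1)‖^2)) := by
        intro k _
        have h3 : Filter.Tendsto (fun n => (ρ n) ^ (p*(k+1))) Filter.atTop (nhds 1) := by
          have := hρlim.pow (p*(k+1))
          simpa using this
        have h4 := ((tendsto_const_nhds (x := ‖a (k+1)‖)
          (f := Filter.atTop (α := ℕ))).mul h3).pow 2
        simpa using h4
      exact tendsto_finset_sum F this
    apply le_of_tendsto hG
    filter_upwards with n
    exact bohr_parseval p hp a f hf hbound (ρ n) (hρ0 n) (hρ1 n) F
  -- geometric bound
  have hgeo_sum : Summable (fun k : ℕ => y^(k+1)) := by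
    have := (summable_geometric_of_lt_one hy0 (by linarith : y < 1)).mul_left y
    apply this.congr
    intro k
    rw [pow_succ]
    ring
  have hgeo : (∑' k : ℕ, y^(k+1)) ≤ 1 := by
    have heval : (∑' k : ℕ, y^(k+1)) = y * (1-y)⁻¹ := by
      have h5 : (fun k : ℕ => y^(k+1)) = fun k => y * y^k := by
        funext k
        rw [pow_succ]
        ring
      rw [h5, tsum_mul_left, tsum_geometric_of_lt_one hy0 (by linarith : y < 1)]
    rw [heval]
    have h7 : y / (1-y) ≤ 1 := (div_le_one h1y).mpr (by linarith)
    rw [div_eq_mul_inv] at h7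
    exact h7
  -- final Cauchy-Schwarz
  have hsummable : Summable (fun k : ℕ => ‖a (k + 1)‖ * r ^ (p * (k + 1))) :=
    bohr_summable p hp a f hf r hr0 hr1
  apply Summable.tsum_le_of_sum_le hsummable
  intro F
  have hCS := Real.sum_mul_le_sqrt_mul_sqrt F (fun k => ‖a (k+1)‖) (fun k => r ^ (p*(k+1)))
  have hB : ∑ k ∈ F, (r ^ (p*(k+1)))^2 ≤ 1 := by
    have hterm : ∀ k : ℕ, (r ^ (p*(k+1)))^2 = y^(k+1) := by
      intro k
      rw [hydef, ← pow_mul, ← pow_mul]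
      congr 1
      ring
    calc ∑ k ∈ F, (r ^ (p*(k+1)))^2 = ∑ k ∈ F, y^(k+1) :=
          Finset.sum_congr rfl (fun k _ => hterm k)
      _ ≤ ∑' k : ℕ, y^(k+1) := Summable.sum_le_tsum F (fun k _ => by positivity) hgeo_sum
      _ ≤ 1 := hgeo
  calc ∑ k ∈ F, ‖a (k + 1)‖ * r ^ (p * (k + 1))
      ≤ Real.sqrt (∑ k ∈ F, ‖a (k+1)‖^2) * Real.sqrt (∑ k ∈ F, (r ^ (p*(k+1)))^2) := hCS
    _ ≤ 1 * 1 := by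
        apply mul_le_mul ?_ ?_ (Real.sqrt_nonneg _) (by norm_num)
        · rw [show (1:ℝ) = Real.sqrt 1 by simp]
          exact Real.sqrt_le_sqrt (hsq F)
        · rw [show (1:ℝ) = Real.sqrt 1 by simp]
          exact Real.sqrt_le_sqrt hB
    _ = 1 := by norm_num
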